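/- (Bounded iterates of NEAR-DGDᵗ) Suppose 0 < α < 1/L and the algorithm is initialized with y_{i,0} = s_0 for all i. Then the NEAR-DGDᵗ iterates are bounded: ‖x_k‖ ≤ D and ‖y_k‖ ≤ D for all k ≥ 1, where D = ‖y_0 − u*‖ + ((ν + 4)/ν)‖u*‖, u* = (u_1*;…;u_n*) with u_i* = argmin f_i, ν = 2αγ, γ = min_i γ_i and γ_i = μ_i L_i/(μ_i + L_i). -/

import Mathlib

open Finset Filter

noncomputable section

open scoped RealInnerProductSpace

section Helpers

variable {E : Type*} [NormedAddCommGroup E] [InnerProductSpace ℝ E] [CompleteSpace E]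

lemma NDGD.inner_gradient_eq (f : E → ℝ) (x v : E) : ⟪gradient f x, v⟫ = fderiv ℝ f x v := by
  rw [gradient]; exact InnerProductSpace.toDual_symm_apply

lemma NDGD.lineHasDerivAt {f : E → ℝ} (hf : Differentiable ℝ f) (x d : E) (s : ℝ) :
    HasDerivAt (fun s : ℝ => f (x + s • d)) ⟪gradient f (x + s • d), d⟫ s := by
  have h1 : HasDerivAt (fun s : ℝ => x + s • d) d s := by
    simpa using ((hasDerivAt_id s).smul_const d).const_add x
  have h2 := (hf (x + s • d)).hasFDerivAt.comp_hasDerivAt s h1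
  rw [NDGD.inner_gradient_eq]; exact h2

/-- Descent lemma: `f y ≤ f x + ⟪∇f x, y-x⟫ + (L/2)‖y-x‖²`. -/
lemma NDGD.descent_lemma {f : E → ℝ} (hf : Differentiable ℝ f) {L : ℝ} (hL : 0 ≤ L)
    (hLip : LipschitzWith (Real.toNNReal L) (fun z => gradient f z)) (x y : E) :
    f y ≤ f x + ⟪gradient f x, y - x⟫ + L / 2 * ‖y - x‖ ^ 2 := by
  set d := y - x with hd
  set C := ⟪gradient f x, d⟫ with hC
  set K := L / 2 * ‖d‖ ^ 2 with hK
  set φ : ℝ → ℝ := fun s => f (x + s • d) - s * C - s ^ 2 * K with hφ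
  have hder : ∀ s : ℝ, HasDerivAt φ (⟪gradient f (x + s • d), d⟫ - C - 2 * s * K) s := by
    intro s
    have h1 := NDGD.lineHasDerivAt hf x d s
    have h2 : HasDerivAt (fun s : ℝ => s * C) C s := by
      simpa using (hasDerivAt_id s).mul_const C
    have h3 : HasDerivAt (fun s : ℝ => s ^ 2 * K) (2 * s * K) s := by
      have := (hasDerivAt_pow 2 s).mul_const K
      simpa [mul_comm] using this
    exact (h1.sub h2).sub h3
  have hanti : AntitoneOn φ (Set.Icc (0:ℝ) 1) := by
    apply antitoneOn_of_deriv_nonpos (convex_Icc 0 1)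
    · exact Continuous.continuousOn (by
        have : Continuous φ := by
          apply Continuous.sub
          apply Continuous.sub
          · exact hf.continuous.comp (by continuity)
          · continuity
          · continuity
        exact this)
    · intro s _
      exact ((hder s).differentiableAt).differentiableWithinAt
    · intro s hs
      rw [interior_Icc] at hs
      rw [(hder s).deriv]
      have hbound : ⟪gradient f (x + s • d), d⟫ - C ≤ L * s * ‖d‖ ^ 2 := by
        have h1 : ⟪gradient f (x + s • d) - gradient f x, d⟫ ≤
            ‖gradient f (x + s • d) - gradient f x‖ * ‖d‖ := real_inner_le_norm _ _
        have h2 : ‖gradient f (x + s • d) - gradient f x‖ ≤ L * ‖s • d‖ := by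
          have := hLip.dist_le_mul (x + s • d) x
          rw [dist_eq_norm, dist_eq_norm] at this
          simpa [Real.coe_toNNReal L hL] using this
        have h3 : ‖s • d‖ = s * ‖d‖ := by
          rw [norm_smul, Real.norm_eq_abs, abs_of_pos hs.1]
        rw [hC, ← inner_sub_left]
        calc ⟪gradient f (x + s • d) - gradient f x, d⟫
            ≤ ‖gradient f (x + s • d) - gradient f x‖ * ‖d‖ := h1
          _ ≤ L * ‖s • d‖ * ‖d‖ := by
              apply mul_le_mul_of_nonneg_right h2 (norm_nonneg _)
          _ = L * s * ‖d‖ ^ 2 := by rw [h3]; ring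
      have : 2 * s * K = L * s * ‖d‖ ^ 2 := by rw [hK]; ring
      linarith
  have h01 := hanti (Set.left_mem_Icc.2 zero_le_one) (Set.right_mem_Icc.2 zero_le_one) zero_le_one
  have hphi0 : φ 0 = f x := by simp [hφ]
  have hphi1 : φ 1 = f y - C - K := by simp [hφ, hd]
  rw [hphi0, hphi1] at h01
  rw [hC, hK] at *
  linarith [h01]

/-- First-order condition for convex differentiable functions. -/
lemma NDGD.convex_first_order {g : E → ℝ} (hconv : ConvexOn ℝ Set.univ g)
    (hg : Differentiable ℝ g) (x y : E) :
    g x + ⟪gradient g x, y - x⟫ ≤ g y := by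
  set d := y - x with hd
  set ψ : ℝ → ℝ := fun s => g (x + s • d) with hψ
  have hψconv : ConvexOn ℝ Set.univ ψ := by
    have := hconv.comp_affineMap (AffineMap.lineMap x y : ℝ →ᵃ[ℝ] E)
    have heq : ψ = g ∘ (AffineMap.lineMap x y : ℝ →ᵃ[ℝ] E) := by
      funext s
      simp [hψ, AffineMap.lineMap_apply, hd]
      rw [add_comm]
    rw [heq]
    simpa using this
  have hder : HasDerivWithinAt ψ ⟪gradient g x, d⟫ (Set.Ioi 0) 0 := by
    have := NDGD.lineHasDerivAt hg x d 0
    simpa using this.hasDerivWithinAt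
  have := hψconv.le_slope_of_hasDerivWithinAt_Ioi (Set.mem_univ (0:ℝ)) (Set.mem_univ (1:ℝ))
    one_pos hder
  rw [slope_def_field] at this
  have hψ0 : ψ 0 = g x := by simp [hψ]
  have hψ1 : ψ 1 = g y := by simp [hψ, hd]
  simp [hψ0, hψ1] at this
  rw [NDGD.inner_gradient_eq]; linarith [this]

/-- gradient of `z ↦ f z - c‖z‖²`. -/
lemma NDGD.hasGradientAt_sub_normsq (f : E → ℝ) (c : ℝ) (x : E) (hf : DifferentiableAt ℝ f x) :
    HasGradientAt (fun z => f z - c * ‖z‖ ^ 2) (gradient f x - (2 * c) • x) x := by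
  rw [hasGradientAt_iff_hasFDerivAt]
  have h1 : HasFDerivAt f (InnerProductSpace.toDual ℝ E (gradient f x)) x := by
    have := hf.hasGradientAt
    rwa [hasGradientAt_iff_hasFDerivAt] at this
  have h2 : HasFDerivAt (fun z : E => c * ‖z‖ ^ 2) (c • (2 • (innerSL ℝ x))) x :=
    (hasStrictFDerivAt_norm_sq x).hasFDerivAt.const_mul c
  have h3 := h1.sub h2
  refine HasFDerivAt.congr_fderiv h3 ?_
  ext v
  simp only [map_sub, InnerProductSpace.toDual_apply_apply, ContinuousLinearMap.coe_sub',
    Pi.sub_apply, ContinuousLinearMap.coe_smul', Pi.smul_apply, innerSL_apply_apply]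
  rw [real_inner_smul_left]
  simp only [smul_eq_mul, two_smul, smul_eq_mul]
  ring

section StrongConvex

variable {f : E → ℝ} {μ L : ℝ}

lemma NDGD.gradient_shift (hμ : 0 < μ) (hdiff : Differentiable ℝ f) :
    ∀ z, gradient (fun z => f z - μ / 2 * ‖z‖ ^ 2) z = gradient f z - μ • z := by
  intro z
  have := NDGD.hasGradientAt_sub_normsq f (μ / 2) z (hdiff z)
  have h2 : (2 * (μ / 2)) = μ := by ring
  rw [h2] at this
  exact this.gradient

/-- strong monotonicity of the gradient of a strongly convex function -/
lemma NDGD.strong_mono (hμ : 0 < μ) (hsc : StrongConvexOn Set.univ μ f)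
    (hdiff : Differentiable ℝ f) (x y : E) :
    μ * ‖x - y‖ ^ 2 ≤ ⟪gradient f x - gradient f y, x - y⟫ := by
  set h : E → ℝ := fun z => f z - μ / 2 * ‖z‖ ^ 2 with hh
  have hgradh := NDGD.gradient_shift hμ hdiff
  have hdiffh : Differentiable ℝ h := fun z =>
    ((NDGD.hasGradientAt_sub_normsq f (μ / 2) z (hdiff z)).differentiableAt)
  have hconvh : ConvexOn ℝ Set.univ h := by
    rw [← strongConvexOn_iff_convex]; exact hsc
  have FO : ∀ a b : E, h a + ⟪gradient f a - μ • a, b - a⟫ ≤ h b := by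
    intro a b
    have := NDGD.convex_first_order hconvh hdiffh a b
    rwa [hgradh] at this
  have ediff : ⟪gradient f x - μ • x, x - y⟫ - ⟪gradient f y - μ • y, x - y⟫
      = ⟪gradient f x - gradient f y, x - y⟫ - μ * ‖x - y‖ ^ 2 := by
    rw [← inner_sub_left]
    have hrw : (gradient f x - μ • x) - (gradient f y - μ • y)
        = (gradient f x - gradient f y) - μ • (x - y) := by
      rw [smul_sub]; abel
    rw [hrw, inner_sub_left, real_inner_smul_left, real_inner_self_eq_norm_sq]
  have h1 := FO x y
  have h2 := FO y x
  have e1 : ⟪gradient f x - μ • x, y - x⟫ = -⟪gradient f x - μ • x, x - y⟫ := by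
    rw [← inner_neg_right]; congr 1; abel
  linarith [ediff]

/-- Coercivity inequality for strongly convex smooth functions. -/
lemma NDGD.coercivity (hμ : 0 < μ) (hμL : μ ≤ L)
    (hsc : StrongConvexOn Set.univ μ f) (hdiff : Differentiable ℝ f)
    (hLip : LipschitzWith (Real.toNNReal L) (fun z => gradient f z)) (x y : E) :
    ‖gradient f x - gradient f y‖ ^ 2 + μ * L * ‖x - y‖ ^ 2
      ≤ (μ + L) * ⟪gradient f x - gradient f y, x - y⟫ := by
  have hL : (0:ℝ) < L := lt_of_lt_of_le hμ hμL
  set h : E → ℝ := fun z => f z - μ / 2 * ‖z‖ ^ 2 with hh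
  have hgradh := NDGD.gradient_shift hμ hdiff
  have hdiffh : Differentiable ℝ h := fun z =>
    ((NDGD.hasGradientAt_sub_normsq f (μ / 2) z (hdiff z)).differentiableAt)
  have hconvh : ConvexOn ℝ Set.univ h := by
    rw [← strongConvexOn_iff_convex]; exact hsc
  have FO : ∀ a b : E, h a + ⟪gradient f a - μ • a, b - a⟫ ≤ h b := by
    intro a b
    have := NDGD.convex_first_order hconvh hdiffh a b
    rwa [hgradh] at this
  have normid : ∀ a b : E, ‖b‖ ^ 2 = ‖a‖ ^ 2 + 2 * ⟪a, b - a⟫ + ‖b - a‖ ^ 2 := by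
    intro a b
    have hexp : ‖b - a‖ ^ 2 = ‖b‖ ^ 2 - 2 * ⟪b, a⟫ + ‖a‖ ^ 2 := norm_sub_sq_real b a
    have hinner : ⟪a, b - a⟫ = ⟪a, b⟫ - ‖a‖ ^ 2 := by
      rw [inner_sub_right, real_inner_self_eq_norm_sq]
    rw [hexp, hinner, real_inner_comm a b]; ring
  have BU : ∀ a b : E, h b ≤ h a + ⟪gradient f a - μ • a, b - a⟫ + (L - μ) / 2 * ‖b - a‖ ^ 2 := by
    intro a b
    have hdesc := NDGD.descent_lemma hdiff hL.le hLip a b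
    have h1 : ⟪gradient f a - μ • a, b - a⟫ = ⟪gradient f a, b - a⟫ - μ * ⟪a, b - a⟫ := by
      rw [inner_sub_left, real_inner_smul_left]
    have h2 := normid a b
    simp only [hh]
    rw [h1]
    nlinarith [h2]
  have e11 : ‖(gradient f x - gradient f y) - μ • (x - y)‖ ^ 2
      = ‖gradient f x - gradient f y‖ ^ 2
        - 2 * μ * ⟪gradient f x - gradient f y, x - y⟫ + μ ^ 2 * ‖x - y‖ ^ 2 := by
    rw [norm_sub_sq_real, real_inner_smul_right, norm_smul, Real.norm_eq_abs, abs_of_pos hμ]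
    ring
  have eswap : ∀ a b : E, ⟪gradient f a - μ • a, b - a⟫ = -⟪gradient f a - μ • a, a - b⟫ := by
    intro a b; rw [← inner_neg_right]; congr 1; abel
  have ediff : ⟪gradient f x - μ • x, x - y⟫ - ⟪gradient f y - μ • y, x - y⟫
      = ⟪gradient f x - gradient f y, x - y⟫ - μ * ‖x - y‖ ^ 2 := by
    rw [← inner_sub_left]
    have hrw : (gradient f x - μ • x) - (gradient f y - μ • y)
        = (gradient f x - gradient f y) - μ • (x - y) := by
      rw [smul_sub]; abel
    rw [hrw, inner_sub_left, real_inner_smul_left, real_inner_self_eq_norm_sq]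
  rcases eq_or_lt_of_le hμL with heq | hlt
  · -- case μ = L
    subst heq
    have mono := NDGD.strong_mono hμ hsc hdiff x y
    have lip : ‖gradient f x - gradient f y‖ ≤ μ * ‖x - y‖ := by
      have := hLip.dist_le_mul x y
      rw [dist_eq_norm, dist_eq_norm] at this
      simpa [Real.coe_toNNReal μ hμ.le] using this
    have lip2 : ‖gradient f x - gradient f y‖ ^ 2 ≤ μ ^ 2 * ‖x - y‖ ^ 2 := by
      nlinarith [norm_nonneg (gradient f x - gradient f y), norm_nonneg (x - y)]
    nlinarith [mul_le_mul_of_nonneg_left mono hμ.le]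
  · -- case μ < L
    have hℓpos : (0:ℝ) < L - μ := by linarith
    have coco : ∀ a b : E,
        h a + ⟪gradient f a - μ • a, b - a⟫ + 1 / (2 * (L - μ)) *
          ‖(gradient f b - μ • b) - (gradient f a - μ • a)‖ ^ 2 ≤ h b := by
      intro a b
      set ga := gradient f a - μ • a with hga
      set gb := gradient f b - μ • b with hgb
      set u := gb - ga with hu
      set w := b - (1 / (L - μ)) • u with hw
      have step1 : h a + ⟪ga, w - a⟫ ≤ h w := FO a w
      have step2 : h w ≤ h b + ⟪gb, w - b⟫ + (L - μ) / 2 * ‖w - b‖ ^ 2 := BU b w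
      have hwb : w - b = -((1 / (L - μ)) • u) := by rw [hw]; abel
      have e1 : ⟪gb, w - b⟫ = -(1 / (L - μ)) * ⟪gb, u⟫ := by
        rw [hwb, inner_neg_right, real_inner_smul_right]; ring
      have e2 : ‖w - b‖ ^ 2 = (1 / (L - μ)) ^ 2 * ‖u‖ ^ 2 := by
        rw [hwb, norm_neg, norm_smul, Real.norm_eq_abs,
          abs_of_pos (by positivity : (0:ℝ) < 1 / (L - μ)), mul_pow]
      have e3 : ⟪ga, w - a⟫ = ⟪ga, b - a⟫ - 1 / (L - μ) * ⟪ga, u⟫ := by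
        have : w - a = (b - a) - (1 / (L - μ)) • u := by rw [hw]; abel
        rw [this, inner_sub_right, real_inner_smul_right]
      have e4 : 1 / (L - μ) * ⟪gb, u⟫ - 1 / (L - μ) * ⟪ga, u⟫ = 1 / (L - μ) * ‖u‖ ^ 2 := by
        rw [← mul_sub, ← inner_sub_left, ← hu, real_inner_self_eq_norm_sq]
      have e5 : (L - μ) / 2 * ((1 / (L - μ)) ^ 2 * ‖u‖ ^ 2) = 1 / (2 * (L - μ)) * ‖u‖ ^ 2 := by
        field_simp
      have e6 : 1 / (L - μ) * ‖u‖ ^ 2 = 2 * (1 / (2 * (L - μ)) * ‖u‖ ^ 2) := by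
        field_simp
      rw [e3] at step1
      rw [e1, e2] at step2
      linarith [step1, step2, e4, e5, e6]
    have c1 := coco x y
    have c2 := coco y x
    have eA := eswap x y
    have eB : ‖(gradient f x - μ • x) - (gradient f y - μ • y)‖ ^ 2
        = ‖(gradient f y - μ • y) - (gradient f x - μ • x)‖ ^ 2 := by
      rw [← norm_neg]; congr 1; abel
    have eC := fun r : ℝ => show 1 / (L - μ) * r = 2 * (1 / (2 * (L - μ)) * r) by
      field_simp
    rw [eA] at c1
    rw [eB] at c2
    have sym : 1 / (L - μ) * ‖(gradient f y - μ • y) - (gradient f x - μ • x)‖ ^ 2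
        ≤ ⟪gradient f x - gradient f y, x - y⟫ - μ * ‖x - y‖ ^ 2 := by
      have := eC (‖(gradient f y - μ • y) - (gradient f x - μ • x)‖ ^ 2)
      linarith [c1, c2, ediff, this]
    have eF : (gradient f y - μ • y) - (gradient f x - μ • x)
        = -((gradient f x - gradient f y) - μ • (x - y)) := by
      rw [smul_sub]; abel
    rw [eF, norm_neg, e11] at sym
    have hsym' : ‖gradient f x - gradient f y‖ ^ 2
          - 2 * μ * ⟪gradient f x - gradient f y, x - y⟫ + μ ^ 2 * ‖x - y‖ ^ 2
        ≤ (L - μ) * (⟪gradient f x - gradient f y, x - y⟫ - μ * ‖x - y‖ ^ 2) := by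
      have := mul_le_mul_of_nonneg_left sym hℓpos.le
      rw [← mul_assoc, mul_one_div, div_self hℓpos.ne'] at this
      linarith
    nlinarith [hsym']

lemma NDGD.gradient_min_zero (u : E) (hu : ∀ z, f u ≤ f z) : gradient f u = 0 := by
  have hmin : IsLocalMin f u := Filter.Eventually.of_forall hu
  rw [gradient, hmin.fderiv_eq_zero, map_zero]

/-- One gradient step is a contraction towards the minimizer. -/
lemma NDGD.step_contract (hμ : 0 < μ) (hμL : μ ≤ L)
    (hsc : StrongConvexOn Set.univ μ f) (hdiff : Differentiable ℝ f)
    (hLip : LipschitzWith (Real.toNNReal L) (fun z => gradient f z))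
    (u : E) (hu : ∀ z, f u ≤ f z) {α ν : ℝ} (hα : 0 < α) (hαL : α * L ≤ 1)
    (hνle : ν ≤ 2 * α * (μ * L / (μ + L))) (z : E) :
    ‖z - α • gradient f z - u‖ ^ 2 ≤ (1 - ν) * ‖z - u‖ ^ 2 := by
  have hL : (0:ℝ) < L := lt_of_lt_of_le hμ hμL
  have hμLpos : (0:ℝ) < μ + L := by linarith
  have hco := NDGD.coercivity hμ hμL hsc hdiff hLip z u
  rw [NDGD.gradient_min_zero u hu, sub_zero] at hco
  have hexp : z - α • gradient f z - u = (z - u) - α • gradient f z := by abel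
  have hnorm : ‖(z - u) - α • gradient f z‖ ^ 2
      = ‖z - u‖ ^ 2 - 2 * α * ⟪gradient f z, z - u⟫ + α ^ 2 * ‖gradient f z‖ ^ 2 := by
    rw [norm_sub_sq_real, real_inner_smul_right, norm_smul, Real.norm_eq_abs, abs_of_pos hα,
      real_inner_comm]
    ring
  rw [hexp, hnorm]
  have hνbound : ν * (μ + L) ≤ 2 * α * (μ * L) := by
    have h1 := mul_le_mul_of_nonneg_right hνle hμLpos.le
    have h2 : 2 * α * (μ * L / (μ + L)) * (μ + L) = 2 * α * (μ * L) := by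
      field_simp
    linarith
  have hαμL : α * (μ + L) ≤ 2 := by nlinarith
  have hαμL2 : α ^ 2 * (μ + L) * ‖gradient f z‖ ^ 2 ≤ 2 * α * ‖gradient f z‖ ^ 2 := by
    nlinarith [mul_le_mul_of_nonneg_right hαμL
      (mul_nonneg hα.le (sq_nonneg ‖gradient f z‖))]
  have t2 : ν * (μ + L) * ‖z - u‖ ^ 2 ≤ 2 * α * (μ * L) * ‖z - u‖ ^ 2 :=
    mul_le_mul_of_nonneg_right hνbound (sq_nonneg _)
  have t3 : 2 * α * (‖gradient f z‖ ^ 2 + μ * L * ‖z - u‖ ^ 2)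
      ≤ 2 * α * ((μ + L) * ⟪gradient f z, z - u⟫) :=
    mul_le_mul_of_nonneg_left hco (by positivity)
  have key : (μ + L) * (α ^ 2 * ‖gradient f z‖ ^ 2 + ν * ‖z - u‖ ^ 2
      - 2 * α * ⟪gradient f z, z - u⟫) ≤ 0 := by nlinarith [hαμL2, t2, t3]
  have hfin : α ^ 2 * ‖gradient f z‖ ^ 2 + ν * ‖z - u‖ ^ 2
      - 2 * α * ⟪gradient f z, z - u⟫ ≤ 0 := by
    by_contra hcon
    push_neg at hcon
    nlinarith [key, mul_pos hμLpos hcon]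
  linarith [hfin]

/-- μ ≤ L whenever a unit vector exists. -/
lemma NDGD.mu_le_L (hμ : 0 < μ) (hsc : StrongConvexOn Set.univ μ f)
    (hdiff : Differentiable ℝ f)
    (hLip : LipschitzWith (Real.toNNReal L) (fun z => gradient f z)) (hL : 0 ≤ L)
    (e : E) (he : ‖e‖ = 1) : μ ≤ L := by
  have hmono := NDGD.strong_mono hμ hsc hdiff e 0
  have hcs : ⟪gradient f e - gradient f 0, e - 0⟫
      ≤ ‖gradient f e - gradient f 0‖ * ‖e - 0‖ := real_inner_le_norm _ _
  have hlip : ‖gradient f e - gradient f 0‖ ≤ L * ‖e - 0‖ := by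
    have := hLip.dist_le_mul e 0
    rw [dist_eq_norm, dist_eq_norm] at this
    simpa [Real.coe_toNNReal L hL] using this
  have he0 : ‖e - 0‖ = 1 := by rw [sub_zero, he]
  rw [he0] at hcs hlip
  rw [he0] at hmono
  nlinarith [hmono, hcs, hlip]

end StrongConvex

end Helpers

/-- A block `ℝ^p` with the Euclidean norm. -/
abbrev Vec (p : ℕ) := EuclideanSpace ℝ (Fin p)

/-- The concatenated space `ℝ^{np}` (n blocks of size p) with the Euclidean norm. -/
abbrev CVec (n p : ℕ) := PiLp 2 (fun _ : Fin n => Vec p)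

/-- Action of the Kronecker product `W ⊗ I_p` on a concatenated vector of `ℝ^{np}`. -/
def kron {n p : ℕ} (W : Matrix (Fin n) (Fin n) ℝ) (x : CVec n p) : CVec n p :=
  WithLp.toLp 2 fun i => ∑ j, W i j • x j

/-- Concatenated gradient `∇f(x) = (∇f₁(x₁); …; ∇fₙ(xₙ))`. -/
def gradConcat {n p : ℕ} (f : Fin n → Vec p → ℝ) (x : CVec n p) : CVec n p :=
  WithLp.toLp 2 fun i => gradient (f i) (x i)

lemma NDGD.kron_sub {n p : ℕ} (M : Matrix (Fin n) (Fin n) ℝ) (a b : CVec n p) :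
    kron M (a - b) = kron M a - kron M b := by
  ext i : 1
  simp only [kron, PiLp.sub_apply, PiLp.toLp_apply, smul_sub]
  rw [Finset.sum_sub_distrib]

lemma NDGD.kron_nonexpansive {n p : ℕ} (M : Matrix (Fin n) (Fin n) ℝ)
    (hnn : ∀ i j, 0 ≤ M i j) (hrow : ∀ i, ∑ j, M i j = 1) (hcol : ∀ j, ∑ i, M i j = 1)
    (v : CVec n p) : ‖kron M v‖ ≤ ‖v‖ := by
  have hsq : ‖kron M v‖ ^ 2 ≤ ‖v‖ ^ 2 := by
    rw [PiLp.norm_sq_eq_of_L2, PiLp.norm_sq_eq_of_L2]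
    have hblock : ∀ i, ‖(kron M v) i‖ ^ 2 ≤ ∑ j, M i j * ‖v j‖ ^ 2 := by
      intro i
      have h1 : ‖(kron M v) i‖ ≤ ∑ j, M i j * ‖v j‖ := by
        simp only [kron, PiLp.toLp_apply]
        refine le_trans (norm_sum_le _ _) (le_of_eq ?_)
        refine Finset.sum_congr rfl fun j _ => ?_
        rw [norm_smul, Real.norm_eq_abs, abs_of_nonneg (hnn i j)]
      have h2 : (∑ j, M i j * ‖v j‖) ^ 2 ≤ (∑ j, M i j) * ∑ j, M i j * ‖v j‖ ^ 2 := by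
        refine Finset.sum_sq_le_sum_mul_sum_of_sq_eq_mul _
          (fun j _ => hnn i j) (fun j _ => mul_nonneg (hnn i j) (sq_nonneg _))
          (fun j _ => ?_)
        ring
      rw [hrow i, one_mul] at h2
      calc ‖(kron M v) i‖ ^ 2 ≤ (∑ j, M i j * ‖v j‖) ^ 2 := by
            apply pow_le_pow_left₀ (norm_nonneg _) h1
        _ ≤ ∑ j, M i j * ‖v j‖ ^ 2 := h2
    calc ∑ i, ‖(kron M v) i‖ ^ 2 ≤ ∑ i, ∑ j, M i j * ‖v j‖ ^ 2 :=
          Finset.sum_le_sum fun i _ => hblock i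
      _ = ∑ j, (∑ i, M i j) * ‖v j‖ ^ 2 := by
          rw [Finset.sum_comm]
          exact Finset.sum_congr rfl fun j _ => by rw [Finset.sum_mul]
      _ = ∑ j, ‖v j‖ ^ 2 := by
          exact Finset.sum_congr rfl fun j _ => by rw [hcol j, one_mul]
  exact (pow_le_pow_iff_left₀ (norm_nonneg _) (norm_nonneg _) two_ne_zero).1 hsq

lemma NDGD.pow_stoch {n : ℕ} (W : Matrix (Fin n) (Fin n) ℝ)
    (hrow : ∀ i, ∑ j, W i j = 1) (hcol : ∀ j, ∑ i, W i j = 1) (hWnn : ∀ i j, 0 ≤ W i j) (t : ℕ) :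
    (∀ i j, 0 ≤ (W ^ t) i j) ∧ (∀ i, ∑ j, (W ^ t) i j = 1) ∧ (∀ j, ∑ i, (W ^ t) i j = 1) := by
  induction t with
  | zero =>
    refine ⟨fun i j => ?_, fun i => ?_, fun j => ?_⟩ <;>
      simp [Matrix.one_apply, Finset.sum_ite_eq, Finset.sum_ite_eq']
    exact ite_nonneg zero_le_one le_rfl
  | succ t ih =>
    obtain ⟨ihnn, ihrow, ihcol⟩ := ih
    rw [pow_succ]
    refine ⟨fun i j => ?_, fun i => ?_, fun j => ?_⟩
    · rw [Matrix.mul_apply]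
      exact Finset.sum_nonneg fun k _ => mul_nonneg (ihnn i k) (hWnn k j)
    · simp only [Matrix.mul_apply]
      rw [Finset.sum_comm]
      calc ∑ k, ∑ j, (W ^ t) i k * W k j = ∑ k, (W ^ t) i k * ∑ j, W k j := by
            exact Finset.sum_congr rfl fun k _ => by rw [Finset.mul_sum]
        _ = 1 := by simp only [hrow, mul_one]; exact ihrow i
    · simp only [Matrix.mul_apply]
      rw [Finset.sum_comm]
      calc ∑ k, ∑ i, (W ^ t) i k * W k j = ∑ k, (∑ i, (W ^ t) i k) * W k j := by
            exact Finset.sum_congr rfl fun k _ => by rw [Finset.sum_mul]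
        _ = 1 := by simp only [ihcol, one_mul]; exact hcol j

lemma NDGD.rec_bound {a b c u R ν : ℝ} (hν0 : 0 < ν) (hν1 : ν ≤ 1) (ha : 0 ≤ a) (hb : 0 ≤ b)
    (hu : 0 ≤ u) (hsq : a ^ 2 ≤ (1 - ν) * b ^ 2) (hxb : b ≤ c + 2 * u)
    (hRν : 4 * u ≤ ν * R) (ih : c ≤ R) : a ≤ R := by
  have hb2 : (0:ℝ) ≤ 1 - ν / 2 := by linarith
  have h3 : (1 - ν) ≤ (1 - ν / 2) ^ 2 := by nlinarith
  have h4 : a ^ 2 ≤ ((1 - ν / 2) * b) ^ 2 := by nlinarith [sq_nonneg b]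
  have h5 : a ≤ (1 - ν / 2) * b :=
    (pow_le_pow_iff_left₀ ha (mul_nonneg hb2 hb) two_ne_zero).1 h4
  have h6 : (1 - ν / 2) * b ≤ (1 - ν / 2) * (c + 2 * u) :=
    mul_le_mul_of_nonneg_left hxb hb2
  have h7 : (1 - ν / 2) * (c + 2 * u) ≤ (1 - ν / 2) * (R + 2 * u) := by
    apply mul_le_mul_of_nonneg_left _ hb2
    linarith
  nlinarith [h5, h6, h7, hRν, hu, hν0.le]

open scoped RealInnerProductSpace in
/-- Bounded iterates of NEAR-DGDᵗ: if `0 < α < 1/L` and `y_{i,0} = s₀`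
for all `i`, then `‖x_k‖ ≤ D` and `‖y_k‖ ≤ D` for all `k ≥ 1`, where
`D = ‖y₀ − u*‖ + ((ν + 4)/ν)‖u*‖`. -/
theorem near_dgdt_bounded_iterates
    (n p t : ℕ) (hn : 1 ≤ n) (hp : 1 ≤ p) (ht : 1 ≤ t)
    -- local objective functions: μᵢ-strongly convex, differentiable,
    -- with Lᵢ-Lipschitz gradients
    (f : Fin n → Vec p → ℝ) (μ Lc : Fin n → ℝ) (L : ℝ)
    (hμpos : ∀ i, 0 < μ i) (hLpos : ∀ i, 0 < Lc i)
    (hsc : ∀ i, StrongConvexOn Set.univ (μ i) (f i))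
    (hdiff : ∀ i, Differentiable ℝ (f i))
    (hLip : ∀ i, LipschitzWith (Real.toNNReal (Lc i)) (fun z => gradient (f i) z))
    (hLmax : IsGreatest (Set.range Lc) L)
    -- u*: the concatenation of the unique minimizers uᵢ* of the fᵢ
    (ustar : CVec n p) (hustar : ∀ i, ∀ z, f i (ustar i) ≤ f i z)
    -- W is symmetric, doubly stochastic, with eigenvalues in (−1, 1]
    (W : Matrix (Fin n) (Fin n) ℝ) (hWsymm : W.IsHermitian)
    (hrow : ∀ i, ∑ j, W i j = 1) (hcol : ∀ j, ∑ i, W i j = 1)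
    (hWnn : ∀ i j, 0 ≤ W i j)
    (heig : ∀ i, hWsymm.eigenvalues i ∈ Set.Ioc (-1 : ℝ) 1)
    -- stepsize 0 < α < 1/L
    (α : ℝ) (hα : 0 < α) (hαlt : α < 1 / L)
    -- NEAR-DGDᵗ iterates: x_k = Zᵗ y_k, y_{k+1} = x_k − α∇f(x_k), with y₀ = (s₀;…;s₀)
    (x y : ℕ → CVec n p)
    (hxdef : ∀ k, x k = kron (W ^ t) (y k))
    (hydef : ∀ k, y (k + 1) = x k - α • gradConcat f (x k))
    (s0 : Vec p) (hy0 : ∀ i, y 0 i = s0)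
    -- γ = minᵢ μᵢLᵢ/(μᵢ + Lᵢ), ν = 2αγ, and the bound D
    (γ ν D : ℝ)
    (hγ : IsLeast (Set.range fun i => μ i * Lc i / (μ i + Lc i)) γ)
    (hν : ν = 2 * α * γ)
    (hD : D = ‖y 0 - ustar‖ + ((ν + 4) / ν) * ‖ustar‖)
    :
    ∀ k, 1 ≤ k → ‖x k‖ ≤ D ∧ ‖y k‖ ≤ D := by
  -- basic positivity facts
  obtain ⟨iL, hiL⟩ := hLmax.1
  have hLpos' : (0:ℝ) < L := hiL ▸ hLpos iL
  obtain ⟨iγ, hiγ⟩ := hγ.1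
  have hγpos : (0:ℝ) < γ := by
    rw [← hiγ]
    have := hμpos iγ; have := hLpos iγ
    positivity
  have hνpos : (0:ℝ) < ν := by rw [hν]; positivity
  have hαL : α * L < 1 := by
    have := (lt_div_iff₀ hLpos').1 hαlt
    linarith
  -- unit vector in Vec p
  have hppos : 0 < p := hp
  set e0 : Vec p := EuclideanSpace.single (⟨0, hppos⟩ : Fin p) (1:ℝ) with he0
  have he0norm : ‖e0‖ = 1 := by
    rw [he0, EuclideanSpace.norm_single, norm_one]
  have hμLle : ∀ i, μ i ≤ Lc i := fun i =>
    NDGD.mu_le_L (hμpos i) (hsc i) (hdiff i) (hLip i) (hLpos i).le e0 he0norm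
  have hαLc : ∀ i, α * Lc i ≤ 1 := by
    intro i
    have h1 : Lc i ≤ L := hLmax.2 ⟨i, rfl⟩
    nlinarith [hαL, hα]
  have hγle : ∀ i, γ ≤ μ i * Lc i / (μ i + Lc i) := fun i => hγ.2 ⟨i, rfl⟩
  have hν1 : ν ≤ 1 := by
    set i := iγ
    have h1 : γ ≤ μ i * Lc i / (μ i + Lc i) := hγle i
    have hμi := hμpos i; have hLci := hLpos i
    have hμLi := hμLle i
    have h2 : μ i * Lc i / (μ i + Lc i) ≤ Lc i / 2 := by
      rw [div_le_div_iff₀ (by linarith) (by norm_num)]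
      nlinarith
    have h3 : α * Lc i ≤ 1 := hαLc i
    rw [hν]
    nlinarith [h1, h2, h3, hα.le]
  -- the stochastic matrix
  obtain ⟨hWtnn, hWtrow, hWtcol⟩ := NDGD.pow_stoch W hrow hcol hWnn t
  have hkron_le : ∀ v : CVec n p, ‖kron (W ^ t) v‖ ≤ ‖v‖ :=
    NDGD.kron_nonexpansive (W ^ t) hWtnn hWtrow hWtcol
  -- main induction
  obtain ⟨R, hR⟩ : ∃ R : ℝ, R = ‖y 0 - ustar‖ + 4 / ν * ‖ustar‖ := ⟨_, rfl⟩
  have hRν : 4 * ‖ustar‖ ≤ ν * R := by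
    have h1 : ν * (4 / ν * ‖ustar‖) = 4 * ‖ustar‖ := by
      field_simp
    rw [hR, mul_add, h1]
    nlinarith [mul_nonneg hνpos.le (norm_nonneg (y 0 - ustar))]
  have main : ∀ k, ‖y k - ustar‖ ≤ R := by
    intro k
    induction k with
    | zero =>
      rw [hR]
      have : 0 ≤ 4 / ν * ‖ustar‖ := by positivity
      linarith
    | succ k ih =>
      -- x_k bound
      have hx_bound : ‖x k - ustar‖ ≤ ‖y k - ustar‖ + 2 * ‖ustar‖ := by
        rw [hxdef k]
        have hsplit : kron (W ^ t) (y k) - ustar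
            = kron (W ^ t) (y k - ustar) + (kron (W ^ t) ustar - ustar) := by
          rw [NDGD.kron_sub]; abel
        rw [hsplit]
        calc ‖kron (W ^ t) (y k - ustar) + (kron (W ^ t) ustar - ustar)‖
            ≤ ‖kron (W ^ t) (y k - ustar)‖ + ‖kron (W ^ t) ustar - ustar‖ := norm_add_le _ _
          _ ≤ ‖y k - ustar‖ + (‖kron (W ^ t) ustar‖ + ‖ustar‖) := by
              gcongr
              · exact hkron_le _
              · exact norm_sub_le _ _
          _ ≤ ‖y k - ustar‖ + 2 * ‖ustar‖ := by
              have := hkron_le ustar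
              linarith
      -- contraction in norm squared
      have hsq : ‖y (k+1) - ustar‖ ^ 2 ≤ (1 - ν) * ‖x k - ustar‖ ^ 2 := by
        rw [hydef k, PiLp.norm_sq_eq_of_L2, PiLp.norm_sq_eq_of_L2, Finset.mul_sum]
        apply Finset.sum_le_sum
        intro i _
        have hblock : (x k - α • gradConcat f (x k) - ustar) i
            = (x k) i - α • gradient (f i) ((x k) i) - ustar i := by
            simp only [PiLp.sub_apply, PiLp.smul_apply, gradConcat, PiLp.toLp_apply]
        have hblock2 : (x k - ustar) i = (x k) i - ustar i := rfl
        rw [hblock, hblock2]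
        apply NDGD.step_contract (hμpos i) (hμLle i) (hsc i) (hdiff i) (hLip i)
          (ustar i) (hustar i) hα (hαLc i)
        rw [hν]
        have := hγle i
        nlinarith [hα.le]
      exact NDGD.rec_bound hνpos hν1 (norm_nonneg _) (norm_nonneg _) (norm_nonneg _)
        hsq hx_bound hRν ih
  -- conclusion
  have hDR : R + ‖ustar‖ = D := by
    rw [hD, hR]
    have : (ν + 4) / ν * ‖ustar‖ = 4 / ν * ‖ustar‖ + ‖ustar‖ := by
      field_simp; ring
    rw [this]; ring
  have hy_bound : ∀ k, ‖y k‖ ≤ D := by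
    intro k
    have h1 : ‖y k‖ ≤ ‖y k - ustar‖ + ‖ustar‖ := by
      have := norm_add_le (y k - ustar) ustar
      simpa using this
    have := main k
    linarith [hDR]
  intro k _
  refine ⟨?_, hy_bound k⟩
  rw [hxdef k]
  exact le_trans (hkron_le (y k)) (hy_bound k)

end
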